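/- For every k ∈ ℕ and r ∈ {0,…,2^k−1}, the refined value S^k(𝒫)_{2^k j + r} is independent of 𝒫_ℓ for ℓ < j + ⌊r/2^k − M_S^{[k]}⌋ and ℓ > j + ⌊r/2^k + M_S^{[k]}⌋, where M_S^{[k]} = Σ_{n=0}^{k−1} M_S/2^n = M_S(2 − 2^{1−k}). -/

import Mathlib

lemma floor_int_add_div_two (b : ℤ) (f : ℝ) (h0 : 0 ≤ f) (h1 : f < 1) :
    ⌊((b:ℝ) + f)/2⌋ = b / 2 := by
  rw [Int.floor_eq_iff]
  have hb : (b:ℝ) = 2*((b/2 : ℤ):ℝ) + ((b % 2 : ℤ):ℝ) := by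
    exact_mod_cast (Int.mul_ediv_add_emod b 2).symm
  have h2 : (0:ℝ) ≤ ((b % 2 : ℤ):ℝ) ∧ ((b % 2 : ℤ):ℝ) ≤ 1 := by
    constructor <;> exact_mod_cast by omega
  constructor <;> [linarith; linarith]

lemma floor_half' (a : ℤ) (x : ℝ) : ⌊((a:ℝ) + x)/2⌋ = (a + ⌊x⌋) / 2 := by
  have h0 : 0 ≤ x - ⌊x⌋ := sub_nonneg.mpr (Int.floor_le x)
  have h1 : x - ⌊x⌋ < 1 := by have := Int.lt_floor_add_one x; linarith
  have e : (a:ℝ) + x = ((a + ⌊x⌋ : ℤ):ℝ) + (x - ⌊x⌋) := by push_cast; ring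
  rw [e, floor_int_add_div_two _ _ h0 h1]

/-- the refined value `S^k(𝒫)_{2^k j + r}` depends only on `𝒫_ℓ` for
`j + ⌊r/2^k − M_S^{[k]}⌋ ≤ ℓ ≤ j + ⌊r/2^k + M_S^{[k]}⌋`, where
`M_S^{[k]} = ∑_{n<k} M_S/2^n`. -/
theorem locality_of_powers_refined {Ω : Type*} (S : (ℤ → Ω) → (ℤ → Ω)) (M : ℕ)
    (hloc : ∀ (P Q : ℤ → Ω) (j : ℤ),
      (∀ ℓ : ℤ, j - M ≤ ℓ → ℓ ≤ j + M → P ℓ = Q ℓ) →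
      S P (2*j) = S Q (2*j) ∧ S P (2*j+1) = S Q (2*j+1)) :
    ∀ (k : ℕ) (P Q : ℤ → Ω) (j : ℤ) (r : ℕ), r < 2^k →
      (∀ ℓ : ℤ,
        j + ⌊(r : ℝ)/2^k - ∑ n ∈ Finset.range k, (M:ℝ)/2^n⌋ ≤ ℓ →
        ℓ ≤ j + ⌊(r : ℝ)/2^k + ∑ n ∈ Finset.range k, (M:ℝ)/2^n⌋ →
        P ℓ = Q ℓ) →
      S^[k] P (2^k * j + r) = S^[k] Q (2^k * j + r) := by
  intro k
  induction k with
  | zero =>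
    intro P Q j r hr h
    interval_cases r
    simpa using h j (by simp) (by simp)
  | succ k ih =>
    intro P Q j r hr h
    set q : ℕ := r / 2^k with hqdef
    set r' : ℕ := r % 2^k with hr'def
    have hmod : 2^k * q + r' = r := Nat.div_add_mod r (2^k)
    have hr'lt : r' < 2^k := Nat.mod_lt _ (by positivity)
    have hq1 : q ≤ 1 := by
      have h2 : r < 2 * 2^k := by rw [pow_succ] at hr; omega
      have h3 : q < 2 := Nat.div_lt_iff_lt_mul (by positivity) |>.mpr h2
      exact Nat.lt_succ_iff.mp h3
    -- real identities
    set Mk : ℝ := ∑ n ∈ Finset.range k, (M:ℝ)/2^n with hMkdef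
    have hMk1 : ∑ n ∈ Finset.range (k+1), (M:ℝ)/2^n = (M:ℝ) + Mk/2 := by
      have e : ∀ i : ℕ, (M:ℝ)/2^(i+1) = ((M:ℝ)/2^i)/2 := fun i => by
        rw [pow_succ]; ring
      rw [Finset.sum_range_succ']
      simp only [e, pow_zero, div_one]
      rw [← Finset.sum_div, ← hMkdef]
      ring
    have hrcast : (r:ℝ) = 2^k * q + r' := by exact_mod_cast hmod.symm
    have h2k : (0:ℝ) < 2^k := by positivity
    have elow : (r:ℝ)/2^(k+1) - (∑ n ∈ Finset.range (k+1), (M:ℝ)/2^n)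
        = (((q:ℤ):ℝ) + ((r':ℝ)/2^k - Mk))/2 - ((M:ℤ):ℝ) := by
      rw [hMk1, hrcast, pow_succ]
      push_cast
      field_simp
      ring
    have eup : (r:ℝ)/2^(k+1) + (∑ n ∈ Finset.range (k+1), (M:ℝ)/2^n)
        = (((q:ℤ):ℝ) + ((r':ℝ)/2^k + Mk))/2 + ((M:ℤ):ℝ) := by
      rw [hMk1, hrcast, pow_succ]
      push_cast
      field_simp
      ring
    have flow : ⌊(r:ℝ)/2^(k+1) - (∑ n ∈ Finset.range (k+1), (M:ℝ)/2^n)⌋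
        = ((q:ℤ) + ⌊(r':ℝ)/2^k - Mk⌋)/2 - (M:ℤ) := by
      rw [elow, Int.floor_sub_intCast, floor_half']
    have fup : ⌊(r:ℝ)/2^(k+1) + (∑ n ∈ Finset.range (k+1), (M:ℝ)/2^n)⌋
        = ((q:ℤ) + ⌊(r':ℝ)/2^k + Mk⌋)/2 + (M:ℤ) := by
      rw [eup, Int.floor_add_intCast, floor_half']
    -- the hypothesis for the inner iterate
    have hinner : ∀ ℓ : ℤ,
        (2*j + (q:ℤ)) + ⌊(r':ℝ)/2^k - Mk⌋ ≤ ℓ →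
        ℓ ≤ (2*j + (q:ℤ)) + ⌊(r':ℝ)/2^k + Mk⌋ →
        S P ℓ = S Q ℓ := by
      intro ℓ hl hu
      obtain ⟨m, hm⟩ : ∃ m : ℤ, ℓ = 2*m ∨ ℓ = 2*m + 1 := ⟨ℓ/2, by omega⟩
      have key := hloc P Q m (fun ℓ' h1 h2 => h ℓ' ?_ ?_)
      · rcases hm with hm | hm <;> rw [hm]
        · exact key.1
        · exact key.2
      · rw [flow]
        set Fl := ⌊(r':ℝ)/2^k - Mk⌋
        omega
      · rw [fup]
        set Fu := ⌊(r':ℝ)/2^k + Mk⌋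
        omega
    have hidx : (2:ℤ)^(k+1) * j + (r:ℤ) = 2^k * (2*j + (q:ℤ)) + (r':ℤ) := by
      have : (r:ℤ) = 2^k * q + r' := by exact_mod_cast hmod.symm
      rw [this, pow_succ]; ring
    calc S^[k+1] P (2^(k+1) * j + r)
        = S^[k] (S P) (2^k * (2*j + q) + r') := by
          rw [Function.iterate_succ_apply, hidx]
      _ = S^[k] (S Q) (2^k * (2*j + q) + r') := ih (S P) (S Q) (2*j + q) r' hr'lt hinner
      _ = S^[k+1] Q (2^(k+1) * j + r) := by
          rw [Function.iterate_succ_apply, hidx]
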